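/- Let Cᵢ be a symmetric positive definite real 3×3 matrix with det Cᵢ = 1 and let c₁₀, c₀₁ ∈ ℝ. Define the Mooney–Rivlin free energy W on the set of symmetric positive definite real 3×3 matrices by W(C) := (c₁₀/2)·(tr((det C)^{-1/3}·C·Cᵢ⁻¹) − 3) + (c₀₁/2)·(tr((det C)^{1/3}·Cᵢ·C⁻¹) − 3). Then W is differentiable at every symmetric positive definite C (as a function on 3×3 matrices near C), and for every symmetric real 3×3 matrix H the directional derivative satisfies DW(C)[H] = (1/2)·tr(T̃·H), where T̃ := C⁻¹·(c₁₀·C̄·Cᵢ⁻¹ − c₀₁·Cᵢ·C̄⁻¹)^D and C̄ := (det C)^{-1/3}·C. That is, the hyperelastic relation T̃ = 2·∂W/∂C yields the stated Mooney–Rivlin second Piola–Kirchhoff stress. -/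

import Mathlib

open Matrix

abbrev Mat := Matrix (Fin 3) (Fin 3) ℝ

attribute [local instance] Matrix.frobeniusNormedAddCommGroup Matrix.frobeniusNormedSpace

/-- The unimodular part of a matrix. -/
noncomputable def unimod (M : Mat) : Mat := (M.det ^ (-(1 : ℝ) / 3)) • M

/-- The deviatoric part of a matrix. -/
noncomputable def dev (M : Mat) : Mat := M - (M.trace / 3) • (1 : Mat)

attribute [local instance] Matrix.frobeniusNormedRing Matrix.frobeniusNormedAlgebra

noncomputable def entryCLM (i j : Fin 3) : Mat →L[ℝ] ℝ :=
  LinearMap.toContinuousLinearMap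
    { toFun := fun M : Mat => M i j, map_add' := fun _ _ => rfl, map_smul' := fun _ _ => rfl }

lemma entryCLM_apply (i j : Fin 3) (M : Mat) : entryCLM i j M = M i j := rfl

lemma hasFDerivAt_entry (i j : Fin 3) (A : Mat) :
    HasFDerivAt (fun M : Mat => M i j) (entryCLM i j) A :=
  (entryCLM i j).hasFDerivAt

noncomputable def traceCLM : Mat →L[ℝ] ℝ :=
  LinearMap.toContinuousLinearMap (Matrix.traceLinearMap (Fin 3) ℝ ℝ)

noncomputable def mulLeftCLM (A : Mat) : Mat →L[ℝ] Mat :=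
  LinearMap.toContinuousLinearMap (LinearMap.mulLeft ℝ A)

noncomputable def mulRightCLM (A : Mat) : Mat →L[ℝ] Mat :=
  LinearMap.toContinuousLinearMap (LinearMap.mulRight ℝ A)

lemma traceCLM_apply (M : Mat) : traceCLM M = M.trace := rfl
lemma mulLeftCLM_apply (A M : Mat) : mulLeftCLM A M = A * M := rfl
lemma mulRightCLM_apply (A M : Mat) : mulRightCLM A M = M * A := rfl

lemma hasFDerivAt_det (A : Mat) :
    HasFDerivAt Matrix.det (traceCLM.comp (mulLeftCLM A.adjugate)) A := by
  have hfun : (Matrix.det : Mat → ℝ) = fun M =>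
      M 0 0 * (M 1 1 * M 2 2) - M 0 1 * (M 1 0 * M 2 2) + M 0 2 * (M 1 0 * M 2 1)
      - M 0 0 * (M 1 2 * M 2 1) + M 0 1 * (M 1 2 * M 2 0) - M 0 2 * (M 1 1 * M 2 0) := by
    funext M
    rw [Matrix.det_fin_three]; ring
  rw [hfun]
  have h := ((((((hasFDerivAt_entry 0 0 A).mul ((hasFDerivAt_entry 1 1 A).mul
      (hasFDerivAt_entry 2 2 A))).sub ((hasFDerivAt_entry 0 1 A).mul
      ((hasFDerivAt_entry 1 0 A).mul (hasFDerivAt_entry 2 2 A)))).add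
      ((hasFDerivAt_entry 0 2 A).mul ((hasFDerivAt_entry 1 0 A).mul
      (hasFDerivAt_entry 2 1 A)))).sub ((hasFDerivAt_entry 0 0 A).mul
      ((hasFDerivAt_entry 1 2 A).mul (hasFDerivAt_entry 2 1 A)))).add
      ((hasFDerivAt_entry 0 1 A).mul ((hasFDerivAt_entry 1 2 A).mul
      (hasFDerivAt_entry 2 0 A)))).sub ((hasFDerivAt_entry 0 2 A).mul
      ((hasFDerivAt_entry 1 1 A).mul (hasFDerivAt_entry 2 0 A)))
  refine h.congr_fderiv ?_
  ext H
  change A 0 0 * (A 1 1 * H 2 2 + A 2 2 * H 1 1) + A 1 1 * A 2 2 * H 0 0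
    - (A 0 1 * (A 1 0 * H 2 2 + A 2 2 * H 1 0) + A 1 0 * A 2 2 * H 0 1)
    + (A 0 2 * (A 1 0 * H 2 1 + A 2 1 * H 1 0) + A 1 0 * A 2 1 * H 0 2)
    - (A 0 0 * (A 1 2 * H 2 1 + A 2 1 * H 1 2) + A 1 2 * A 2 1 * H 0 0)
    + (A 0 1 * (A 1 2 * H 2 0 + A 2 0 * H 1 2) + A 1 2 * A 2 0 * H 0 1)
    - (A 0 2 * (A 1 1 * H 2 0 + A 2 0 * H 1 1) + A 1 1 * A 2 0 * H 0 2) = (A.adjugate * H).trace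
  simp [entryCLM_apply, traceCLM, mulLeftCLM, Matrix.trace, Matrix.mul_apply,
    Matrix.adjugate_apply, Matrix.det_fin_three, Matrix.updateRow_apply, Pi.single_apply,
    Fin.sum_univ_three, Matrix.diag, ContinuousLinearMap.smul_apply, smul_eq_mul,
    LinearMap.coe_toContinuousLinearMap', traceLinearMap_apply, LinearMap.mulLeft_apply]
  ring

/-- the Mooney–Rivlin free energy
`W(C) = (c₁₀/2)(tr((det C)^{-1/3}·C·Cᵢ⁻¹) − 3) + (c₀₁/2)(tr((det C)^{1/3}·Cᵢ·C⁻¹) − 3)`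
is differentiable at every symmetric positive definite `C`, and for every symmetric `H`
its derivative satisfies `DW(C)[H] = (1/2)·tr(T̃·H)` with
`T̃ = C⁻¹·(c₁₀·C̄·Cᵢ⁻¹ − c₀₁·Cᵢ·C̄⁻¹)^D`. -/
theorem mooney_rivlin_hyperelastic_stress (Ci : Mat) (hCi : Ci.PosDef) (h1 : Ci.det = 1)
    (c10 c01 : ℝ) (C : Mat) (hC : C.PosDef) :
    ∃ W' : Mat →L[ℝ] ℝ,
      HasFDerivAt (fun M : Mat =>
          c10 / 2 * (((M.det ^ (-(1 : ℝ) / 3)) • (M * Ci⁻¹)).trace - 3) +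
          c01 / 2 * (((M.det ^ ((1 : ℝ) / 3)) • (Ci * M⁻¹)).trace - 3)) W' C ∧
        ∀ H : Mat, Hᵀ = H →
          W' H = 1 / 2 *
            ((C⁻¹ * dev (c10 • (unimod C * Ci⁻¹) - c01 • (Ci * (unimod C)⁻¹)) * H).trace) := by
  have hd : 0 < C.det := hC.det_pos
  have hud : IsUnit C.det := hd.ne'.isUnit
  have hu : IsUnit C := (Matrix.isUnit_iff_isUnit_det C).2 hud
  have detD := hasFDerivAt_det C
  have hinv : HasFDerivAt (fun M : Mat => M⁻¹)
      (-(ContinuousLinearMap.mulLeftRight ℝ Mat C⁻¹ C⁻¹)) C := by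
    have h := hasFDerivAt_ringInverse (𝕜 := ℝ) hu.unit
    rw [hu.unit_spec] at h
    have heq : (↑hu.unit⁻¹ : Mat) = C⁻¹ := by
      rw [Matrix.nonsing_inv_eq_ringInverse]
      calc (↑hu.unit⁻¹ : Mat) = Ring.inverse (↑hu.unit : Mat) := (Ring.inverse_unit hu.unit).symm
        _ = Ring.inverse C := by rw [hu.unit_spec]
    rw [heq] at h
    refine h.congr_of_eventuallyEq (Filter.Eventually.of_forall fun M => ?_)
    exact Matrix.nonsing_inv_eq_ringInverse M
  have hr1 : HasFDerivAt (fun M : Mat => M.det ^ (-(1:ℝ)/3))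
      ((((-(1:ℝ)/3)) * C.det ^ ((-(1:ℝ)/3) - 1)) • (traceCLM.comp (mulLeftCLM C.adjugate))) C :=
    detD.rpow_const (Or.inl hd.ne')
  have hr2 : HasFDerivAt (fun M : Mat => M.det ^ ((1:ℝ)/3))
      (((((1:ℝ)/3)) * C.det ^ (((1:ℝ)/3) - 1)) • (traceCLM.comp (mulLeftCLM C.adjugate))) C :=
    detD.rpow_const (Or.inl hd.ne')
  have ht1 : HasFDerivAt (fun M : Mat => (M * Ci⁻¹).trace)
      (traceCLM.comp (mulRightCLM Ci⁻¹)) C :=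
    (traceCLM.comp (mulRightCLM Ci⁻¹)).hasFDerivAt
  have ht2 : HasFDerivAt (fun M : Mat => (Ci * M⁻¹).trace)
      ((traceCLM.comp (mulLeftCLM Ci)).comp
        (-(ContinuousLinearMap.mulLeftRight ℝ Mat C⁻¹ C⁻¹))) C :=
    ((traceCLM.comp (mulLeftCLM Ci)).hasFDerivAt).comp C hinv
  have hW := (((hr1.mul ht1).sub_const 3).const_mul (c10/2)).add
      (((hr2.mul ht2).sub_const 3).const_mul (c01/2))
  have hfg : (fun x : Mat => c10 / 2 * (x.det ^ (-(1:ℝ)/3) * (x * Ci⁻¹).trace - 3)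
        + c01 / 2 * (x.det ^ ((1:ℝ)/3) * (Ci * x⁻¹).trace - 3))
      = (fun M : Mat =>
          c10 / 2 * (((M.det ^ (-(1 : ℝ) / 3)) • (M * Ci⁻¹)).trace - 3) +
          c01 / 2 * (((M.det ^ ((1 : ℝ) / 3)) • (Ci * M⁻¹)).trace - 3)) := by
    funext M
    simp [Matrix.trace_smul, smul_eq_mul]
  change HasFDerivAt (fun x : Mat => c10 / 2 * (x.det ^ (-(1:ℝ)/3) * (x * Ci⁻¹).trace - 3)
        + c01 / 2 * (x.det ^ ((1:ℝ)/3) * (Ci * x⁻¹).trace - 3)) _ C at hW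
  rw [hfg] at hW
  refine ⟨_, hW, ?_⟩
  intro H _
  have hadj : (C.adjugate * H).trace = C.det * (C⁻¹ * H).trace := by
    have hadjm : C.det • C⁻¹ = C.adjugate := by
      rw [Matrix.inv_def, smul_smul, Ring.inverse_eq_inv', mul_inv_cancel₀ hd.ne', one_smul]
    rw [← hadjm, Matrix.smul_mul, Matrix.trace_smul, smul_eq_mul]
  have hp1 : C.det ^ ((-(1:ℝ)/3) - 1) * C.det = C.det ^ (-(1:ℝ)/3) := by
    rw [Real.rpow_sub hd, Real.rpow_one]; field_simp
  have hp2 : C.det ^ (((1:ℝ)/3) - 1) * C.det = C.det ^ ((1:ℝ)/3) := by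
    rw [Real.rpow_sub hd, Real.rpow_one]; field_simp
  change c10 / 2 * (C.det ^ (-(1:ℝ)/3) * (H * Ci⁻¹).trace + (C * Ci⁻¹).trace *
      ((-(1:ℝ)/3 * C.det ^ ((-(1:ℝ)/3) - 1)) * (C.adjugate * H).trace)) +
    c01 / 2 * (C.det ^ ((1:ℝ)/3) * (Ci * -(C⁻¹ * H * C⁻¹)).trace + (Ci * C⁻¹).trace *
      (((1:ℝ)/3 * C.det ^ (((1:ℝ)/3) - 1)) * (C.adjugate * H).trace)) = _
  have hu0 : C.det ^ (-(1:ℝ)/3) ≠ 0 := (Real.rpow_pos_of_pos hd _).ne'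
  have huv : (C.det ^ (-(1:ℝ)/3))⁻¹ = C.det ^ ((1:ℝ)/3) := by
    have : (-(1:ℝ)/3) = -((1:ℝ)/3) := by norm_num
    rw [this, Real.rpow_neg hd.le, inv_inv]
  have hui : (unimod C)⁻¹ = (C.det ^ ((1:ℝ)/3)) • C⁻¹ := by
    rw [unimod]
    refine Matrix.inv_eq_left_inv ?_
    rw [Matrix.smul_mul, Matrix.mul_smul, smul_smul, Matrix.nonsing_inv_mul C hud,
      ← huv, inv_mul_cancel₀ hu0, one_smul]
  have hRHS : C⁻¹ * dev (c10 • (unimod C * Ci⁻¹) - c01 • (Ci * (unimod C)⁻¹)) * H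
      = c10 • ((C.det ^ (-(1:ℝ)/3)) • (Ci⁻¹ * H))
        - c01 • ((C.det ^ ((1:ℝ)/3)) • (C⁻¹ * (Ci * (C⁻¹ * H))))
        - (((c10 • ((C.det ^ (-(1:ℝ)/3)) • (C * Ci⁻¹))
            - c01 • (Ci * ((C.det ^ ((1:ℝ)/3)) • C⁻¹))).trace) / 3) • (C⁻¹ * H) := by
    rw [dev, hui, unimod]
    simp only [Matrix.mul_sub, Matrix.sub_mul, Matrix.mul_smul, Matrix.smul_mul,
      Matrix.mul_one, Matrix.mul_assoc, Matrix.nonsing_inv_mul_cancel_left C _ hud]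
  rw [hRHS]
  have h3 : (Ci * -(C⁻¹ * H * C⁻¹)).trace = -(C⁻¹ * (Ci * (C⁻¹ * H))).trace := by
    rw [Matrix.mul_neg, Matrix.trace_neg, ← Matrix.mul_assoc,
      Matrix.trace_mul_comm (Ci * (C⁻¹ * H)) C⁻¹]
  rw [h3, hadj]
  have h4 : (H * Ci⁻¹).trace = (Ci⁻¹ * H).trace := Matrix.trace_mul_comm H Ci⁻¹
  rw [h4]
  simp only [Matrix.trace_sub, Matrix.trace_smul, smul_eq_mul, Matrix.mul_smul]
  linear_combination (c10 / 2 * (C * Ci⁻¹).trace * (-1 / 3) * (C⁻¹ * H).trace) * hp1 +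
    (c01 / 2 * (Ci * C⁻¹).trace * (1 / 3) * (C⁻¹ * H).trace) * hp2
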